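/- arXiv:2007.09419 — 4 statements merged into one kernel-verified Lean document; each statement's English description precedes it below -/
import Mathlib

section
/- Let γ₂ ≠ 0, Υ₁, Υ₂ ∈ ℝ and let W(x) = Υ₁ + Υ₂e^{γ₂x}. Suppose 𝒲 : [0,∞) → ℝ is continuous, ξ : [0,∞) → ℝ is continuously differentiable, and 𝒲 satisfies the renewal equation 𝒲(x) = W(x) + ∫₀ˣ W(x−y)ξ(y)𝒲(y)dy for all x ≥ 0. Then 𝒲 is twice continuously differentiable and satisfies the ODE 𝒲''(x) = ((Υ₁+Υ₂)ξ(x)+γ₂)𝒲'(x) + ((Υ₁+Υ₂)ξ'(x) − γ₂Υ₁ξ(x))𝒲(x), with initial conditions 𝒲(0) = Υ₁+Υ₂ and 𝒲'(0) = (Υ₁+Υ₂)²ξ(0) + Υ₂γ₂. -/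
open Set

/-- The ω-scale function 𝒲 solving the renewal equation with
W(x) = Υ₁ + Υ₂e^{γ₂x} is C² on [0,∞) and solves the stated second-order ODE
with the stated initial conditions. -/
theorem stmt5 (γ₂ Υ₁ Υ₂ : ℝ) (hγ : γ₂ ≠ 0) (W 𝒲 ξ : ℝ → ℝ)
    (hW : ∀ x : ℝ, W x = Υ₁ + Υ₂ * Real.exp (γ₂ * x))
    (h𝒲c : ContinuousOn 𝒲 (Ici 0))
    (hξ : ContDiffOn ℝ 1 ξ (Ici 0))
    (hren : ∀ x : ℝ, 0 ≤ x →
      𝒲 x = W x + ∫ y in (0:ℝ)..x, W (x - y) * ξ y * 𝒲 y) :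
    ContDiffOn ℝ 2 𝒲 (Ici 0) ∧
    (∀ x : ℝ, 0 ≤ x →
      derivWithin (derivWithin 𝒲 (Ici 0)) (Ici 0) x =
        ((Υ₁ + Υ₂) * ξ x + γ₂) * derivWithin 𝒲 (Ici 0) x
          + ((Υ₁ + Υ₂) * derivWithin ξ (Ici 0) x - γ₂ * Υ₁ * ξ x) * 𝒲 x) ∧
    𝒲 0 = Υ₁ + Υ₂ ∧
    derivWithin 𝒲 (Ici 0) 0 = (Υ₁ + Υ₂) ^ 2 * ξ 0 + Υ₂ * γ₂ := by
  have hU : UniqueDiffOn ℝ (Ici (0:ℝ)) := uniqueDiffOn_Ici 0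
  set m : ℝ → ℝ := fun y => max y 0 with hm
  have hmc : Continuous m := continuous_id.max continuous_const
  have hmem : ∀ y : ℝ, m y ∈ Ici (0:ℝ) := fun y => le_max_right y 0
  have hmeq : ∀ y : ℝ, 0 ≤ y → m y = y := fun y hy => max_eq_left hy
  set g : ℝ → ℝ := fun y => ξ (m y) * 𝒲 (m y) with hgdef
  have hgc : Continuous g :=
    (hξ.continuousOn.comp_continuous hmc hmem).mul (h𝒲c.comp_continuous hmc hmem)
  set g₂ : ℝ → ℝ := fun y => Real.exp (-(γ₂ * y)) * g y with hg₂def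
  have hg₂c : Continuous g₂ :=
    (Real.continuous_exp.comp (continuous_const.mul continuous_id).neg).mul hgc
  set F : ℝ → ℝ := fun x => ∫ y in (0:ℝ)..x, g y with hFdef
  set G : ℝ → ℝ := fun x => ∫ y in (0:ℝ)..x, g₂ y with hGdef
  have hFd : ∀ x : ℝ, HasDerivAt F (g x) x :=
    fun x => (hgc.integral_hasStrictDerivAt 0 x).hasDerivAt
  have hGd : ∀ x : ℝ, HasDerivAt G (g₂ x) x :=
    fun x => (hg₂c.integral_hasStrictDerivAt 0 x).hasDerivAt
  have hFc : Continuous F := by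
    rw [continuous_iff_continuousAt]; exact fun x => (hFd x).continuousAt
  -- the key integral identity
  have hid : ∀ x : ℝ, 0 ≤ x →
      𝒲 x = Υ₁ * (1 + F x) + Υ₂ * Real.exp (γ₂ * x) * (1 + G x) := by
    intro x hx
    have h1 : ∀ y ∈ uIcc (0:ℝ) x,
        W (x - y) * ξ y * 𝒲 y = Υ₁ * g y + (Υ₂ * Real.exp (γ₂ * x)) * g₂ y := by
      intro y hy
      rw [uIcc_of_le hx] at hy
      have hy0 : (0:ℝ) ≤ y := hy.1
      rw [hW]
      simp only [hg₂def, hgdef, hmeq y hy0]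
      rw [show γ₂ * (x - y) = γ₂ * x + -(γ₂ * y) by ring, Real.exp_add]
      ring
    have i1 : IntervalIntegrable (fun y => Υ₁ * g y) MeasureTheory.volume 0 x :=
      (continuous_const.mul hgc).intervalIntegrable 0 x
    have i2 : IntervalIntegrable (fun y => (Υ₂ * Real.exp (γ₂ * x)) * g₂ y)
        MeasureTheory.volume 0 x :=
      (continuous_const.mul hg₂c).intervalIntegrable 0 x
    have h2 : (∫ y in (0:ℝ)..x, W (x - y) * ξ y * 𝒲 y)
        = Υ₁ * F x + (Υ₂ * Real.exp (γ₂ * x)) * G x := by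
      rw [intervalIntegral.integral_congr h1, intervalIntegral.integral_add i1 i2,
        intervalIntegral.integral_const_mul, intervalIntegral.integral_const_mul]
    rw [hren x hx, hW, h2]; ring
  set D : ℝ → ℝ := fun x => γ₂ * 𝒲 x - γ₂ * Υ₁ * (1 + F x) + (Υ₁ + Υ₂) * g x with hD
  have h𝒲d : ∀ x ∈ Ici (0:ℝ), HasDerivWithinAt 𝒲 (D x) (Ici 0) x := by
    intro x hx
    have hf : HasDerivAt (fun x : ℝ => γ₂ * x) γ₂ x := by
      simpa using (hasDerivAt_id x).const_mul γ₂
    have he : HasDerivAt (fun x : ℝ => Real.exp (γ₂ * x)) (Real.exp (γ₂ * x) * γ₂) x := hf.exp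
    have h1 : HasDerivAt (fun x => 1 + F x) (g x) x := (hFd x).const_add 1
    have h2 : HasDerivAt (fun x => 1 + G x) (g₂ x) x := (hGd x).const_add 1
    have hprod := (he.const_mul Υ₂).mul h2
    have hH := (h1.const_mul Υ₁).add hprod
    have hval : Υ₁ * g x + (Υ₂ * (Real.exp (γ₂ * x) * γ₂) * (1 + G x)
        + Υ₂ * Real.exp (γ₂ * x) * g₂ x) = D x := by
      have h3 : Real.exp (γ₂ * x) * Real.exp (-(γ₂ * x)) = 1 := by
        rw [← Real.exp_add]; simp
      have h4 : Υ₂ * Real.exp (γ₂ * x) * (1 + G x) = 𝒲 x - Υ₁ * (1 + F x) := by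
        rw [hid x hx]; ring
      rw [hD, hg₂def]
      simp only
      linear_combination γ₂ * h4 + Υ₂ * g x * h3
    rw [hval] at hH
    exact (hH.hasDerivWithinAt).congr (fun y hy => hid y hy) (hid x hx)
  have hder : ∀ x ∈ Ici (0:ℝ), derivWithin 𝒲 (Ici 0) x = D x :=
    fun x hx => (h𝒲d x hx).derivWithin (hU x hx)
  have hξd : ∀ x ∈ Ici (0:ℝ), HasDerivWithinAt ξ (derivWithin ξ (Ici 0) x) (Ici 0) x :=
    fun x hx => ((hξ.differentiableOn one_ne_zero) x hx).hasDerivWithinAt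
  have hgd : ∀ x ∈ Ici (0:ℝ),
      HasDerivWithinAt g (derivWithin ξ (Ici 0) x * 𝒲 x + ξ x * D x) (Ici 0) x := by
    intro x hx
    have := (hξd x hx).mul (h𝒲d x hx)
    exact this.congr (fun y hy => by simp [hgdef, hmeq y hy]) (by simp [hgdef, hmeq x hx])
  set E : ℝ → ℝ := fun x => γ₂ * D x - γ₂ * Υ₁ * g x
      + (Υ₁ + Υ₂) * (derivWithin ξ (Ici 0) x * 𝒲 x + ξ x * D x) with hE
  have hDd : ∀ x ∈ Ici (0:ℝ), HasDerivWithinAt D (E x) (Ici 0) x := by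
    intro x hx
    have h1 := (h𝒲d x hx).const_mul γ₂
    have h2 : HasDerivWithinAt (fun x => γ₂ * Υ₁ * (1 + F x)) (γ₂ * Υ₁ * g x) (Ici 0) x :=
      (((hFd x).const_add 1).const_mul (γ₂ * Υ₁)).hasDerivWithinAt
    have h3 := (hgd x hx).const_mul (Υ₁ + Υ₂)
    exact (h1.sub h2).add h3
  have hDc : ContinuousOn D (Ici 0) := by
    rw [hD]
    exact ((continuousOn_const.mul h𝒲c).sub
      (continuousOn_const.mul (continuousOn_const.add hFc.continuousOn))).add
      (continuousOn_const.mul hgc.continuousOn)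
  have hξ'c : ContinuousOn (derivWithin ξ (Ici 0)) (Ici 0) :=
    hξ.continuousOn_derivWithin hU le_rfl
  have hEc : ContinuousOn E (Ici 0) := by
    rw [hE]
    exact ((continuousOn_const.mul hDc).sub (continuousOn_const.mul hgc.continuousOn)).add
      (continuousOn_const.mul ((hξ'c.mul h𝒲c).add (hξ.continuousOn.mul hDc)))
  have hD1 : ContDiffOn ℝ 1 D (Ici 0) := by
    rw [show (1 : WithTop ℕ∞) = 0 + 1 by norm_num, contDiffOn_succ_iff_derivWithin hU]
    refine ⟨fun x hx => (hDd x hx).differentiableWithinAt, by simp, ?_⟩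
    rw [contDiffOn_zero]
    exact hEc.congr fun x hx => (hDd x hx).derivWithin (hU x hx)
  have h𝒲2 : ContDiffOn ℝ 2 𝒲 (Ici 0) := by
    rw [show (2 : WithTop ℕ∞) = 1 + 1 by norm_num, contDiffOn_succ_iff_derivWithin hU]
    exact ⟨fun x hx => (h𝒲d x hx).differentiableWithinAt, by simp, hD1.congr hder⟩
  have h𝒲0 : 𝒲 0 = Υ₁ + Υ₂ := by
    rw [hren 0 le_rfl, intervalIntegral.integral_same, hW]; simp
  refine ⟨h𝒲2, ?_, h𝒲0, ?_⟩
  · intro x hx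
    have hx' : x ∈ Ici (0:ℝ) := hx
    have e1 : derivWithin (derivWithin 𝒲 (Ici 0)) (Ici 0) x = derivWithin D (Ici 0) x :=
      derivWithin_congr (fun y hy => hder y hy) (hder x hx')
    rw [e1, (hDd x hx').derivWithin (hU x hx'), hder x hx']
    have hgx : g x = ξ x * 𝒲 x := by simp [hgdef, hmeq x hx]
    rw [hE]
    simp only
    rw [hgx]
    ring
  · rw [hder 0 self_mem_Ici, hD]
    simp only
    have hF0 : F 0 = 0 := intervalIntegral.integral_same
    have hg0 : g 0 = ξ 0 * 𝒲 0 := by simp [hgdef, hm]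
    rw [hF0, hg0, h𝒲0]
    ring
end

section
/- Let γ₂ ≠ 0, Υ₁, Υ₂ ∈ ℝ and let W(x) = Υ₁ + Υ₂e^{γ₂x}. Suppose 𝒵 : [0,∞) → ℝ is continuous, ξ : [0,∞) → ℝ is continuously differentiable, and 𝒵 satisfies 𝒵(x) = 1 + ∫₀ˣ W(x−y)ξ(y)𝒵(y)dy for all x ≥ 0. Then 𝒵 is twice continuously differentiable and satisfies 𝒵''(x) = ((Υ₁+Υ₂)ξ(x)+γ₂)𝒵'(x) + ((Υ₁+Υ₂)ξ'(x) − γ₂Υ₁ξ(x))𝒵(x), with 𝒵(0) = 1 and 𝒵'(0) = (Υ₁+Υ₂)ξ(0). -/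
open Set

open MeasureTheory intervalIntegral

private lemma ftc_Ici {g : ℝ → ℝ} (hg : ContinuousOn g (Ici 0)) {b : ℝ} (hb : 0 ≤ b) :
    HasDerivWithinAt (fun x => ∫ y in (0:ℝ)..x, g y) (g b) (Ici 0) b := by
  have hint : IntervalIntegrable g volume 0 b :=
    (hg.mono (by rw [uIcc_of_le hb]; exact Icc_subset_Ici_self)).intervalIntegrable
  rcases eq_or_lt_of_le hb with h0 | h0
  · subst h0
    exact integral_hasDerivWithinAt_right (t := Ioi 0) hint
      ((hg.mono Ioi_subset_Ici_self).stronglyMeasurableAtFilter_nhdsWithin measurableSet_Ioi 0)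
      ((hg 0 self_mem_Ici).mono Ioi_subset_Ici_self)
  · have hb' : Ici (0:ℝ) ∈ nhds b := Ici_mem_nhds h0
    have hc : ContinuousAt g b := (hg b hb).continuousAt hb'
    exact (integral_hasDerivAt_right hint
      ⟨Ici 0, hb', hg.aestronglyMeasurable measurableSet_Ici⟩ hc).hasDerivWithinAt

/-- The ω-scale function 𝒵 solving 𝒵(x) = 1 + ∫₀ˣ W(x−y)ξ(y)𝒵(y)dy with
W(x) = Υ₁ + Υ₂e^{γ₂x} is C² and solves the stated second-order ODE. -/
theorem stmt6 (γ₂ Υ₁ Υ₂ : ℝ) (hγ : γ₂ ≠ 0) (W 𝒵 ξ : ℝ → ℝ)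
    (hW : ∀ x : ℝ, W x = Υ₁ + Υ₂ * Real.exp (γ₂ * x))
    (h𝒵c : ContinuousOn 𝒵 (Ici 0))
    (hξ : ContDiffOn ℝ 1 ξ (Ici 0))
    (hren : ∀ x : ℝ, 0 ≤ x →
      𝒵 x = 1 + ∫ y in (0:ℝ)..x, W (x - y) * ξ y * 𝒵 y) :
    ContDiffOn ℝ 2 𝒵 (Ici 0) ∧
    (∀ x : ℝ, 0 ≤ x →
      derivWithin (derivWithin 𝒵 (Ici 0)) (Ici 0) x =
        ((Υ₁ + Υ₂) * ξ x + γ₂) * derivWithin 𝒵 (Ici 0) x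
          + ((Υ₁ + Υ₂) * derivWithin ξ (Ici 0) x - γ₂ * Υ₁ * ξ x) * 𝒵 x) ∧
    𝒵 0 = 1 ∧
    derivWithin 𝒵 (Ici 0) 0 = (Υ₁ + Υ₂) * ξ 0 := by
  set g : ℝ → ℝ := fun y => ξ y * 𝒵 y with hg_def
  set h : ℝ → ℝ := fun y => Real.exp (-(γ₂ * y)) * g y with hh_def
  set B : ℝ → ℝ := fun x => ∫ y in (0:ℝ)..x, h y with hB_def
  have hgc : ContinuousOn g (Ici 0) := (hξ.continuousOn).mul h𝒵c
  have hexpD : ∀ b : ℝ, HasDerivAt (fun x : ℝ => Real.exp (γ₂ * x)) (γ₂ * Real.exp (γ₂ * b)) b := by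
    intro b
    have := ((Real.hasDerivAt_exp (γ₂ * b)).comp b ((hasDerivAt_id b).const_mul γ₂))
    simp only [Function.comp_def, id_eq, mul_one] at this
    simpa [mul_comm] using this
  have hexpc : Continuous (fun x : ℝ => Real.exp (γ₂ * x)) := by fun_prop
  have hexpC : ContDiff ℝ 1 (fun x : ℝ => Real.exp (γ₂ * x)) := by
    have h1 : ContDiff ℝ 1 (fun x : ℝ => γ₂ * x) := contDiff_const.mul contDiff_id
    simpa [Function.comp_def] using Real.contDiff_exp.comp h1
  have hhc : ContinuousOn h (Ici 0) :=
    ((Real.continuous_exp.comp (continuous_const.mul continuous_id).neg).continuousOn).mul hgc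
  -- rewrite of the renewal equation
  have hren' : ∀ x : ℝ, 0 ≤ x →
      𝒵 x = 1 + Υ₁ * (∫ y in (0:ℝ)..x, g y) + Υ₂ * Real.exp (γ₂ * x) * B x := by
    intro x hx
    have hintg : IntervalIntegrable g volume 0 x :=
      (hgc.mono (by rw [uIcc_of_le hx]; exact Icc_subset_Ici_self)).intervalIntegrable
    have hinth : IntervalIntegrable h volume 0 x :=
      (hhc.mono (by rw [uIcc_of_le hx]; exact Icc_subset_Ici_self)).intervalIntegrable
    have key : ∀ y : ℝ, W (x - y) * ξ y * 𝒵 y = Υ₁ * g y + (Υ₂ * Real.exp (γ₂ * x)) * h y := by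
      intro y
      rw [hW, hh_def, hg_def]
      simp only
      rw [show γ₂ * (x - y) = γ₂ * x + -(γ₂ * y) by ring, Real.exp_add]
      ring
    rw [hren x hx]
    simp_rw [key]
    rw [intervalIntegral.integral_add (hintg.const_mul _) (hinth.const_mul _),
      intervalIntegral.integral_const_mul, intervalIntegral.integral_const_mul]
    simp only [hB_def]
    ring
  set D : ℝ → ℝ := fun b => (Υ₁ + Υ₂) * g b + γ₂ * Υ₂ * (Real.exp (γ₂ * b) * B b) with hD_def
  have hB : ∀ b : ℝ, 0 ≤ b → HasDerivWithinAt B (h b) (Ici 0) b := fun b hb => ftc_Ici hhc hb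
  have h𝒵' : ∀ b : ℝ, 0 ≤ b → HasDerivWithinAt 𝒵 (D b) (Ici 0) b := by
    intro b hb
    have hA := ftc_Ici hgc hb
    have hE : HasDerivWithinAt (fun x : ℝ => Real.exp (γ₂ * x)) (γ₂ * Real.exp (γ₂ * b)) (Ici 0) b :=
      (hexpD b).hasDerivWithinAt
    have hF : HasDerivWithinAt
        (fun x => 1 + Υ₁ * (∫ y in (0:ℝ)..x, g y) + Υ₂ * Real.exp (γ₂ * x) * B x)
        (Υ₁ * g b + Υ₂ * (γ₂ * Real.exp (γ₂ * b) * B b + Real.exp (γ₂ * b) * h b)) (Ici 0) b := by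
      have h1 : HasDerivWithinAt (fun x => Υ₂ * (Real.exp (γ₂ * x) * B x))
          (Υ₂ * (γ₂ * Real.exp (γ₂ * b) * B b + Real.exp (γ₂ * b) * h b)) (Ici 0) b :=
        (hE.mul (hB b hb)).const_mul Υ₂
      have h2 := ((hasDerivWithinAt_const b (Ici 0) (1:ℝ)).add ((hA.const_mul Υ₁))).add h1
      refine (h2.congr_deriv (by ring)).congr (fun x _ => ?_) ?_ <;> simp [mul_assoc]
    have heq : D b = Υ₁ * g b + Υ₂ * (γ₂ * Real.exp (γ₂ * b) * B b + Real.exp (γ₂ * b) * h b) := by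
      have hexp : Real.exp (γ₂ * b) * Real.exp (-(γ₂ * b)) = 1 := by
        rw [← Real.exp_add]; simp
      rw [hD_def, hh_def]
      simp only
      linear_combination (-(Υ₂ * ξ b * 𝒵 b)) * hexp
    rw [heq]
    exact hF.congr (fun y hy => hren' y hy) (hren' b hb)
  have hDc : ContinuousOn D (Ici 0) := by
    apply ContinuousOn.add
    · exact continuousOn_const.mul hgc
    · exact continuousOn_const.mul
        (hexpc.continuousOn.mul (fun b hb => (hB b hb).continuousWithinAt))
  have hDeq : ∀ b ∈ Ici (0:ℝ), derivWithin 𝒵 (Ici 0) b = D b := fun b hb =>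
    (h𝒵' b hb).derivWithin (uniqueDiffOn_Ici 0 b hb)
  have h𝒵diff : DifferentiableOn ℝ 𝒵 (Ici 0) := fun b hb => (h𝒵' b hb).differentiableWithinAt
  have h𝒵C1 : ContDiffOn ℝ 1 𝒵 (Ici 0) := by
    rw [show (1 : WithTop ℕ∞) = 0 + 1 by norm_num,
      contDiffOn_succ_iff_derivWithin (uniqueDiffOn_Ici 0)]
    exact ⟨h𝒵diff, by simp, contDiffOn_zero.2 (hDc.congr hDeq)⟩
  have hBC1 : ContDiffOn ℝ 1 B (Ici 0) := by
    rw [show (1 : WithTop ℕ∞) = 0 + 1 by norm_num,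
      contDiffOn_succ_iff_derivWithin (uniqueDiffOn_Ici 0)]
    refine ⟨fun b hb => (hB b hb).differentiableWithinAt, by simp, contDiffOn_zero.2
      (hhc.congr (fun b hb => (hB b hb).derivWithin (uniqueDiffOn_Ici 0 b hb)))⟩
  have hDC1 : ContDiffOn ℝ 1 D (Ici 0) := by
    apply ContDiffOn.add
    · exact contDiffOn_const.mul (hξ.mul h𝒵C1)
    · exact contDiffOn_const.mul (hexpC.contDiffOn.mul hBC1)
  have h𝒵C2 : ContDiffOn ℝ 2 𝒵 (Ici 0) := by
    rw [show (2 : WithTop ℕ∞) = 1 + 1 by norm_num,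
      contDiffOn_succ_iff_derivWithin (uniqueDiffOn_Ici 0)]
    exact ⟨h𝒵diff, by simp, hDC1.congr hDeq⟩
  have h𝒵0 : 𝒵 0 = 1 := by rw [hren 0 le_rfl]; simp
  refine ⟨h𝒵C2, ?_, h𝒵0, ?_⟩
  · intro x hx
    have hξd : HasDerivWithinAt ξ (derivWithin ξ (Ici 0) x) (Ici 0) x :=
      ((hξ.differentiableOn one_ne_zero) x hx).hasDerivWithinAt
    have hE : HasDerivWithinAt (fun y : ℝ => Real.exp (γ₂ * y)) (γ₂ * Real.exp (γ₂ * x)) (Ici 0) x :=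
      (hexpD x).hasDerivWithinAt
    have hDd : HasDerivWithinAt D
        ((Υ₁ + Υ₂) * (derivWithin ξ (Ici 0) x * 𝒵 x + ξ x * D x)
          + γ₂ * Υ₂ * (γ₂ * Real.exp (γ₂ * x) * B x + Real.exp (γ₂ * x) * h x)) (Ici 0) x := by
      have h1 : HasDerivWithinAt (fun b => (Υ₁ + Υ₂) * g b)
          ((Υ₁ + Υ₂) * (derivWithin ξ (Ici 0) x * 𝒵 x + ξ x * D x)) (Ici 0) x :=
        (hξd.mul (h𝒵' x hx)).const_mul _
      have h2 : HasDerivWithinAt (fun b => γ₂ * Υ₂ * (Real.exp (γ₂ * b) * B b))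
          (γ₂ * Υ₂ * (γ₂ * Real.exp (γ₂ * x) * B x + Real.exp (γ₂ * x) * h x)) (Ici 0) x :=
        (hE.mul (hB x hx)).const_mul (γ₂ * Υ₂)
      exact h1.add h2
    have hsnd : derivWithin (derivWithin 𝒵 (Ici 0)) (Ici 0) x = derivWithin D (Ici 0) x :=
      derivWithin_congr hDeq (hDeq x hx)
    rw [hsnd, hDd.derivWithin (uniqueDiffOn_Ici 0 x hx), hDeq x hx]
    have hexp : Real.exp (γ₂ * x) * Real.exp (-(γ₂ * x)) = 1 := by
      rw [← Real.exp_add]; simp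
    rw [hD_def, hh_def, hg_def]
    simp only
    linear_combination (γ₂ * Υ₂ * ξ x * 𝒵 x) * hexp
  · rw [hDeq 0 self_mem_Ici, hD_def]
    simp only
    rw [hB_def]
    simp [hg_def, h𝒵0]
end

section
/- Let γ₂, γ₃ be nonzero reals with γ₂ ≠ γ₃, and Υ₁, Υ₂, Υ₃ ∈ ℝ with Υ₁ + Υ₂ + Υ₃ = 0. Let W(x) = Υ₁ + Υ₂e^{γ₂x} + Υ₃e^{γ₃x}. If 𝒲 : [0,∞) → ℝ is continuous, ξ is C¹, and 𝒲(x) = W(x) + ∫₀ˣ W(x−y)ξ(y)𝒲(y)dy for all x ≥ 0, then 𝒲 is three times continuously differentiable and 𝒲'''(x) = (γ₂+γ₃)𝒲''(x) + (Υ₂(γ₂−γ₃)ξ(x) − γ₂γ₃ − γ₃Υ₁ξ(x))𝒲'(x) + (Υ₂(γ₂−γ₃)ξ'(x) + γ₂γ₃Υ₁ξ(x) − γ₃Υ₁ξ'(x))𝒲(x), with 𝒲(0) = 0, 𝒲'(0) = Υ₂γ₂ + Υ₃γ₃, and 𝒲''(0) = Υ₂γ₂² + Υ₃γ₃². -/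
open Set MeasureTheory

/-- FTC helper: derivative within `Ici 0` of `x ↦ ∫₀ˣ g` for `g` continuous on `Ici 0`. -/
theorem s7ftc (g : ℝ → ℝ) (hg : ContinuousOn g (Ici 0)) {x : ℝ} (hx : (0:ℝ) ≤ x) :
    HasDerivWithinAt (fun t => ∫ y in (0:ℝ)..t, g y) (g x) (Ici 0) x := by
  have hint : IntervalIntegrable g MeasureTheory.volume 0 x :=
    (hg.mono (by rw [uIcc_of_le hx]; exact Icc_subset_Ici_self)).intervalIntegrable
  have hmg : AEStronglyMeasurable g (volume.restrict (Ici 0)) :=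
    hg.aestronglyMeasurable measurableSet_Ici
  rcases eq_or_lt_of_le hx with rfl | hx'
  · exact intervalIntegral.integral_hasDerivWithinAt_right hint
      ⟨Ici 0, Filter.mem_of_superset self_mem_nhdsWithin Ioi_subset_Ici_self, hmg⟩
      ((hg 0 self_mem_Ici).mono Ioi_subset_Ici_self)
  · have : ContinuousAt g x := (hg x hx).continuousAt (Ici_mem_nhds hx')
    exact (intervalIntegral.integral_hasDerivAt_right hint
      ⟨Ici 0, Ici_mem_nhds hx', hmg⟩ this).hasDerivWithinAt

noncomputable def s7intg (γ : ℝ) (ξ 𝒲 : ℝ → ℝ) : ℝ → ℝ :=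
  fun t => ∫ y in (0:ℝ)..t, Real.exp (-(γ * y)) * (ξ y * 𝒲 y)

theorem s7intg_contOn (γ : ℝ) (ξ 𝒲 : ℝ → ℝ) (hξ : ContinuousOn ξ (Ici 0))
    (h𝒲 : ContinuousOn 𝒲 (Ici 0)) :
    ContinuousOn (fun y => Real.exp (-(γ * y)) * (ξ y * 𝒲 y)) (Ici 0) :=
  (Continuous.continuousOn (Real.continuous_exp.comp (continuous_mul_left γ).neg)).mul (hξ.mul h𝒲)

theorem s7intg_deriv (γ : ℝ) (ξ 𝒲 : ℝ → ℝ) (hξ : ContinuousOn ξ (Ici 0))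
    (h𝒲 : ContinuousOn 𝒲 (Ici 0)) {x : ℝ} (hx : (0:ℝ) ≤ x) :
    HasDerivWithinAt (s7intg γ ξ 𝒲) (Real.exp (-(γ * x)) * (ξ x * 𝒲 x)) (Ici 0) x :=
  s7ftc _ (s7intg_contOn γ ξ 𝒲 hξ h𝒲) hx

theorem s7intg_cont (γ : ℝ) (ξ 𝒲 : ℝ → ℝ) (hξ : ContinuousOn ξ (Ici 0))
    (h𝒲 : ContinuousOn 𝒲 (Ici 0)) : ContinuousOn (s7intg γ ξ 𝒲) (Ici 0) :=
  fun x hx => ((s7intg_deriv γ ξ 𝒲 hξ h𝒲 hx).differentiableWithinAt).continuousWithinAt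

theorem s7intg_zero (γ : ℝ) (ξ 𝒲 : ℝ → ℝ) : s7intg γ ξ 𝒲 0 = 0 :=
  intervalIntegral.integral_same

set_option maxHeartbeats 1000000

/-- With W(x) = Υ₁ + Υ₂e^{γ₂x} + Υ₃e^{γ₃x}, Υ₁+Υ₂+Υ₃ = 0, the ω-scale
function 𝒲 solving the renewal equation is C³ and solves the stated
third-order ODE with the stated initial conditions. -/
theorem stmt7 (γ₂ γ₃ Υ₁ Υ₂ Υ₃ : ℝ) (hγ₂ : γ₂ ≠ 0) (hγ₃ : γ₃ ≠ 0)
    (hγ : γ₂ ≠ γ₃) (hΥ : Υ₁ + Υ₂ + Υ₃ = 0) (W 𝒲 ξ : ℝ → ℝ)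
    (hW : ∀ x : ℝ, W x = Υ₁ + Υ₂ * Real.exp (γ₂ * x) + Υ₃ * Real.exp (γ₃ * x))
    (h𝒲c : ContinuousOn 𝒲 (Ici 0))
    (hξ : ContDiffOn ℝ 1 ξ (Ici 0))
    (hren : ∀ x : ℝ, 0 ≤ x →
      𝒲 x = W x + ∫ y in (0:ℝ)..x, W (x - y) * ξ y * 𝒲 y) :
    ContDiffOn ℝ 3 𝒲 (Ici 0) ∧
    (∀ x : ℝ, 0 ≤ x →
      derivWithin (derivWithin (derivWithin 𝒲 (Ici 0)) (Ici 0)) (Ici 0) x =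
        (γ₂ + γ₃) * derivWithin (derivWithin 𝒲 (Ici 0)) (Ici 0) x
          + (Υ₂ * (γ₂ - γ₃) * ξ x - γ₂ * γ₃ - γ₃ * Υ₁ * ξ x)
              * derivWithin 𝒲 (Ici 0) x
          + (Υ₂ * (γ₂ - γ₃) * derivWithin ξ (Ici 0) x
              + γ₂ * γ₃ * Υ₁ * ξ x - γ₃ * Υ₁ * derivWithin ξ (Ici 0) x) * 𝒲 x) ∧
    𝒲 0 = 0 ∧
    derivWithin 𝒲 (Ici 0) 0 = Υ₂ * γ₂ + Υ₃ * γ₃ ∧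
    derivWithin (derivWithin 𝒲 (Ici 0)) (Ici 0) 0 = Υ₂ * γ₂ ^ 2 + Υ₃ * γ₃ ^ 2 := by
  have hΥ3 : Υ₃ = -Υ₁ - Υ₂ := by linarith
  subst hΥ3
  have hξc : ContinuousOn ξ (Ici 0) := hξ.continuousOn
  have hξdc : ContinuousOn (derivWithin ξ (Ici 0)) (Ici 0) :=
    hξ.continuousOn_derivWithin (uniqueDiffOn_Ici 0) le_rfl
  have hξd : ∀ x ∈ Ici (0:ℝ), HasDerivWithinAt ξ (derivWithin ξ (Ici 0) x) (Ici 0) x :=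
    fun x hx => ((hξ.differentiableOn one_ne_zero) x hx).hasDerivWithinAt
  set A := s7intg 0 ξ 𝒲 with hA
  set B := s7intg γ₂ ξ 𝒲 with hB
  set C := s7intg γ₃ ξ 𝒲 with hC
  have hAd : ∀ x ∈ Ici (0:ℝ), HasDerivWithinAt A (ξ x * 𝒲 x) (Ici 0) x := by
    intro x hx
    simpa using s7intg_deriv 0 ξ 𝒲 hξc h𝒲c hx
  have hBd : ∀ x ∈ Ici (0:ℝ),
      HasDerivWithinAt B (Real.exp (-(γ₂ * x)) * (ξ x * 𝒲 x)) (Ici 0) x :=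
    fun x hx => s7intg_deriv γ₂ ξ 𝒲 hξc h𝒲c hx
  have hCd : ∀ x ∈ Ici (0:ℝ),
      HasDerivWithinAt C (Real.exp (-(γ₃ * x)) * (ξ x * 𝒲 x)) (Ici 0) x :=
    fun x hx => s7intg_deriv γ₃ ξ 𝒲 hξc h𝒲c hx
  have hBc : ContinuousOn B (Ici 0) := s7intg_cont γ₂ ξ 𝒲 hξc h𝒲c
  have hCc : ContinuousOn C (Ici 0) := s7intg_cont γ₃ ξ 𝒲 hξc h𝒲c
  -- the splitting of the renewal equation
  have hF : ∀ x ∈ Ici (0:ℝ), 𝒲 x =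
      Υ₁ + Υ₂ * (Real.exp (γ₂*x) * (1 + B x)) + (-Υ₁-Υ₂) * (Real.exp (γ₃*x) * (1 + C x))
        + Υ₁ * A x := by
    intro x hx
    rw [hren x hx, hW]
    have hi1 : IntervalIntegrable (fun y => Real.exp (-(0*y)) * (ξ y * 𝒲 y)) volume 0 x :=
      ((s7intg_contOn 0 ξ 𝒲 hξc h𝒲c).mono
        (by rw [uIcc_of_le hx]; exact Icc_subset_Ici_self)).intervalIntegrable
    have hi2 : IntervalIntegrable (fun y => Real.exp (-(γ₂*y)) * (ξ y * 𝒲 y)) volume 0 x :=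
      ((s7intg_contOn γ₂ ξ 𝒲 hξc h𝒲c).mono
        (by rw [uIcc_of_le hx]; exact Icc_subset_Ici_self)).intervalIntegrable
    have hi3 : IntervalIntegrable (fun y => Real.exp (-(γ₃*y)) * (ξ y * 𝒲 y)) volume 0 x :=
      ((s7intg_contOn γ₃ ξ 𝒲 hξc h𝒲c).mono
        (by rw [uIcc_of_le hx]; exact Icc_subset_Ici_self)).intervalIntegrable
    have hsplit : (∫ y in (0:ℝ)..x, W (x - y) * ξ y * 𝒲 y)
        = Υ₁ * A x + ((Υ₂ * Real.exp (γ₂*x)) * B x + ((-Υ₁-Υ₂) * Real.exp (γ₃*x)) * C x) := by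
      have heq : EqOn (fun y => W (x - y) * ξ y * 𝒲 y)
          (fun y => Υ₁ * (Real.exp (-(0*y)) * (ξ y * 𝒲 y))
            + ((Υ₂ * Real.exp (γ₂*x)) * (Real.exp (-(γ₂*y)) * (ξ y * 𝒲 y))
              + ((-Υ₁-Υ₂) * Real.exp (γ₃*x)) * (Real.exp (-(γ₃*y)) * (ξ y * 𝒲 y))))
          (uIcc 0 x) := by
        intro y _
        simp only [hW, mul_sub, Real.exp_sub, Real.exp_neg, zero_mul, neg_zero,
          Real.exp_zero]
        field_simp
        ring
      rw [intervalIntegral.integral_congr heq,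
        intervalIntegral.integral_add (hi1.const_mul _) ((hi2.const_mul _).add (hi3.const_mul _)),
        intervalIntegral.integral_add (hi2.const_mul _) (hi3.const_mul _),
        intervalIntegral.integral_const_mul, intervalIntegral.integral_const_mul,
        intervalIntegral.integral_const_mul]
      rfl
    rw [hsplit]; ring
  -- exponential derivatives
  have hE : ∀ (γ : ℝ) (x : ℝ),
      HasDerivWithinAt (fun t => Real.exp (γ*t)) (γ * Real.exp (γ*x)) (Ici 0) x := by
    intro γ x
    have h := ((hasDerivAt_id x).const_mul γ).exp
    simpa [mul_comm] using h.hasDerivWithinAt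
  -- first derivative
  have hG1 : ∀ x ∈ Ici (0:ℝ), HasDerivWithinAt
      (fun t => Υ₁ + Υ₂ * (Real.exp (γ₂*t) * (1 + B t)) + (-Υ₁-Υ₂) * (Real.exp (γ₃*t) * (1 + C t))
        + Υ₁ * A t)
      (Υ₂*γ₂ * (Real.exp (γ₂*x) * (1 + B x))
        + (-Υ₁-Υ₂)*γ₃ * (Real.exp (γ₃*x) * (1 + C x))) (Ici 0) x := by
    intro x hx
    have h1 := (hE γ₂ x).mul ((hasDerivWithinAt_const x (Ici 0) (1:ℝ)).add (hBd x hx))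
    have h2 := (hE γ₃ x).mul ((hasDerivWithinAt_const x (Ici 0) (1:ℝ)).add (hCd x hx))
    have h := (((hasDerivWithinAt_const x (Ici 0) Υ₁).add (h1.const_mul Υ₂)).add
      (h2.const_mul (-Υ₁-Υ₂))).add ((hAd x hx).const_mul Υ₁)
    refine h.congr_deriv ?_
    simp only [Pi.add_apply]
    rw [Real.exp_neg, Real.exp_neg]
    field_simp
    ring
  have hd1 : ∀ x ∈ Ici (0:ℝ), HasDerivWithinAt 𝒲
      (Υ₂*γ₂ * (Real.exp (γ₂*x) * (1 + B x))
        + (-Υ₁-Υ₂)*γ₃ * (Real.exp (γ₃*x) * (1 + C x))) (Ici 0) x :=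
    fun x hx => ((hG1 x hx).congr hF (hF x hx))
  have heq1 : ∀ x ∈ Ici (0:ℝ), derivWithin 𝒲 (Ici 0) x
      = Υ₂*γ₂ * (Real.exp (γ₂*x) * (1 + B x))
        + (-Υ₁-Υ₂)*γ₃ * (Real.exp (γ₃*x) * (1 + C x)) :=
    fun x hx => (hd1 x hx).derivWithin (uniqueDiffOn_Ici 0 x hx)
  -- second derivative
  have hG2 : ∀ x ∈ Ici (0:ℝ), HasDerivWithinAt
      (fun t => Υ₂*γ₂ * (Real.exp (γ₂*t) * (1 + B t))
        + (-Υ₁-Υ₂)*γ₃ * (Real.exp (γ₃*t) * (1 + C t)))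
      (Υ₂*γ₂^2 * (Real.exp (γ₂*x) * (1 + B x))
        + (-Υ₁-Υ₂)*γ₃^2 * (Real.exp (γ₃*x) * (1 + C x))
        + (Υ₂*γ₂ + (-Υ₁-Υ₂)*γ₃) * (ξ x * 𝒲 x)) (Ici 0) x := by
    intro x hx
    have h1 := (hE γ₂ x).mul ((hasDerivWithinAt_const x (Ici 0) (1:ℝ)).add (hBd x hx))
    have h2 := (hE γ₃ x).mul ((hasDerivWithinAt_const x (Ici 0) (1:ℝ)).add (hCd x hx))
    have h := (h1.const_mul (Υ₂*γ₂)).add (h2.const_mul ((-Υ₁-Υ₂)*γ₃))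
    refine h.congr_deriv ?_
    simp only [Pi.add_apply]
    rw [Real.exp_neg, Real.exp_neg]
    field_simp
    ring
  have hd2 : ∀ x ∈ Ici (0:ℝ), HasDerivWithinAt (derivWithin 𝒲 (Ici 0))
      (Υ₂*γ₂^2 * (Real.exp (γ₂*x) * (1 + B x))
        + (-Υ₁-Υ₂)*γ₃^2 * (Real.exp (γ₃*x) * (1 + C x))
        + (Υ₂*γ₂ + (-Υ₁-Υ₂)*γ₃) * (ξ x * 𝒲 x)) (Ici 0) x :=
    fun x hx => ((hG2 x hx).congr heq1 (heq1 x hx))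
  have heq2 : ∀ x ∈ Ici (0:ℝ), derivWithin (derivWithin 𝒲 (Ici 0)) (Ici 0) x
      = Υ₂*γ₂^2 * (Real.exp (γ₂*x) * (1 + B x))
        + (-Υ₁-Υ₂)*γ₃^2 * (Real.exp (γ₃*x) * (1 + C x))
        + (Υ₂*γ₂ + (-Υ₁-Υ₂)*γ₃) * (ξ x * 𝒲 x) :=
    fun x hx => (hd2 x hx).derivWithin (uniqueDiffOn_Ici 0 x hx)
  -- third derivative
  have hG3 : ∀ x ∈ Ici (0:ℝ), HasDerivWithinAt
      (fun t => Υ₂*γ₂^2 * (Real.exp (γ₂*t) * (1 + B t))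
        + (-Υ₁-Υ₂)*γ₃^2 * (Real.exp (γ₃*t) * (1 + C t))
        + (Υ₂*γ₂ + (-Υ₁-Υ₂)*γ₃) * (ξ t * 𝒲 t))
      (Υ₂*γ₂^3 * (Real.exp (γ₂*x) * (1 + B x))
        + (-Υ₁-Υ₂)*γ₃^3 * (Real.exp (γ₃*x) * (1 + C x))
        + (Υ₂*γ₂^2 + (-Υ₁-Υ₂)*γ₃^2) * (ξ x * 𝒲 x)
        + (Υ₂*γ₂ + (-Υ₁-Υ₂)*γ₃) * (derivWithin ξ (Ici 0) x * 𝒲 x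
            + ξ x * (Υ₂*γ₂ * (Real.exp (γ₂*x) * (1 + B x))
              + (-Υ₁-Υ₂)*γ₃ * (Real.exp (γ₃*x) * (1 + C x))))) (Ici 0) x := by
    intro x hx
    have h1 := (hE γ₂ x).mul ((hasDerivWithinAt_const x (Ici 0) (1:ℝ)).add (hBd x hx))
    have h2 := (hE γ₃ x).mul ((hasDerivWithinAt_const x (Ici 0) (1:ℝ)).add (hCd x hx))
    have h3 := (hξd x hx).mul (hd1 x hx)
    have h := ((h1.const_mul (Υ₂*γ₂^2)).add (h2.const_mul ((-Υ₁-Υ₂)*γ₃^2))).add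
      (h3.const_mul (Υ₂*γ₂ + (-Υ₁-Υ₂)*γ₃))
    refine h.congr_deriv ?_
    simp only [Pi.add_apply]
    rw [Real.exp_neg, Real.exp_neg]
    field_simp
    ring
  have hd3 : ∀ x ∈ Ici (0:ℝ), HasDerivWithinAt (derivWithin (derivWithin 𝒲 (Ici 0)) (Ici 0))
      (Υ₂*γ₂^3 * (Real.exp (γ₂*x) * (1 + B x))
        + (-Υ₁-Υ₂)*γ₃^3 * (Real.exp (γ₃*x) * (1 + C x))
        + (Υ₂*γ₂^2 + (-Υ₁-Υ₂)*γ₃^2) * (ξ x * 𝒲 x)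
        + (Υ₂*γ₂ + (-Υ₁-Υ₂)*γ₃) * (derivWithin ξ (Ici 0) x * 𝒲 x
            + ξ x * (Υ₂*γ₂ * (Real.exp (γ₂*x) * (1 + B x))
              + (-Υ₁-Υ₂)*γ₃ * (Real.exp (γ₃*x) * (1 + C x))))) (Ici 0) x :=
    fun x hx => ((hG3 x hx).congr heq2 (heq2 x hx))
  have heq3 : ∀ x ∈ Ici (0:ℝ),
      derivWithin (derivWithin (derivWithin 𝒲 (Ici 0)) (Ici 0)) (Ici 0) x
      = Υ₂*γ₂^3 * (Real.exp (γ₂*x) * (1 + B x))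
        + (-Υ₁-Υ₂)*γ₃^3 * (Real.exp (γ₃*x) * (1 + C x))
        + (Υ₂*γ₂^2 + (-Υ₁-Υ₂)*γ₃^2) * (ξ x * 𝒲 x)
        + (Υ₂*γ₂ + (-Υ₁-Υ₂)*γ₃) * (derivWithin ξ (Ici 0) x * 𝒲 x
            + ξ x * (Υ₂*γ₂ * (Real.exp (γ₂*x) * (1 + B x))
              + (-Υ₁-Υ₂)*γ₃ * (Real.exp (γ₃*x) * (1 + C x)))) :=
    fun x hx => (hd3 x hx).derivWithin (uniqueDiffOn_Ici 0 x hx)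
  -- smoothness
  have hUD := uniqueDiffOn_Ici (0:ℝ)
  have hEc : ∀ γ : ℝ, ContinuousOn (fun t => Real.exp (γ*t)) (Ici (0:ℝ)) :=
    fun γ => Continuous.continuousOn (Real.continuous_exp.comp (continuous_mul_left γ))
  have hF1c : ContinuousOn (fun x => Υ₂*γ₂ * (Real.exp (γ₂*x) * (1 + B x))
      + (-Υ₁-Υ₂)*γ₃ * (Real.exp (γ₃*x) * (1 + C x))) (Ici 0) :=
    (continuousOn_const.mul ((hEc γ₂).mul (continuousOn_const.add hBc))).add
      (continuousOn_const.mul ((hEc γ₃).mul (continuousOn_const.add hCc)))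
  have hF3c : ContinuousOn (fun x => Υ₂*γ₂^3 * (Real.exp (γ₂*x) * (1 + B x))
        + (-Υ₁-Υ₂)*γ₃^3 * (Real.exp (γ₃*x) * (1 + C x))
        + (Υ₂*γ₂^2 + (-Υ₁-Υ₂)*γ₃^2) * (ξ x * 𝒲 x)
        + (Υ₂*γ₂ + (-Υ₁-Υ₂)*γ₃) * (derivWithin ξ (Ici 0) x * 𝒲 x
            + ξ x * (Υ₂*γ₂ * (Real.exp (γ₂*x) * (1 + B x))
              + (-Υ₁-Υ₂)*γ₃ * (Real.exp (γ₃*x) * (1 + C x))))) (Ici 0) :=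
    ((((continuousOn_const.mul ((hEc γ₂).mul (continuousOn_const.add hBc))).add
      (continuousOn_const.mul ((hEc γ₃).mul (continuousOn_const.add hCc)))).add
      (continuousOn_const.mul (hξc.mul h𝒲c))).add
      (continuousOn_const.mul ((hξdc.mul h𝒲c).add (hξc.mul hF1c))))
  have l1 : ContDiffOn ℝ 1 (fun t => Υ₂*γ₂^2 * (Real.exp (γ₂*t) * (1 + B t))
        + (-Υ₁-Υ₂)*γ₃^2 * (Real.exp (γ₃*t) * (1 + C t))
        + (Υ₂*γ₂ + (-Υ₁-Υ₂)*γ₃) * (ξ t * 𝒲 t)) (Ici 0) := by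
    rw [show (1 : WithTop ℕ∞) = 0 + 1 by norm_num, contDiffOn_succ_iff_derivWithin hUD]
    refine ⟨fun x hx => (hG3 x hx).differentiableWithinAt, by simp, ?_⟩
    rw [contDiffOn_zero]
    exact hF3c.congr (fun x hx => (hG3 x hx).derivWithin (hUD x hx))
  have l2 : ContDiffOn ℝ 2 (fun t => Υ₂*γ₂ * (Real.exp (γ₂*t) * (1 + B t))
        + (-Υ₁-Υ₂)*γ₃ * (Real.exp (γ₃*t) * (1 + C t))) (Ici 0) := by
    rw [show (2 : WithTop ℕ∞) = 1 + 1 by norm_num, contDiffOn_succ_iff_derivWithin hUD]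
    refine ⟨fun x hx => (hG2 x hx).differentiableWithinAt, by simp, ?_⟩
    exact l1.congr (fun x hx => (hG2 x hx).derivWithin (hUD x hx))
  have hsmooth : ContDiffOn ℝ 3 𝒲 (Ici 0) := by
    rw [show (3 : WithTop ℕ∞) = 2 + 1 by norm_num, contDiffOn_succ_iff_derivWithin hUD]
    exact ⟨fun x hx => (hd1 x hx).differentiableWithinAt, by simp, l2.congr heq1⟩
  have h𝒲0 : 𝒲 0 = 0 := by
    rw [hF 0 self_mem_Ici, hA, hB, hC]
    simp [s7intg_zero]
  refine ⟨hsmooth, ?_, h𝒲0, ?_, ?_⟩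
  · intro x hx0
    have hx : x ∈ Ici (0:ℝ) := hx0
    rw [heq3 x hx, heq2 x hx, heq1 x hx]
    ring
  · rw [heq1 0 self_mem_Ici, hB, hC]
    simp [s7intg_zero]
  · rw [heq2 0 self_mem_Ici, hB, hC, h𝒲0]
    simp [s7intg_zero]
end

section
/- Let C, D > 0, μ ∈ ℝ, σ > 0. Set L = 1/2 − μ/σ², M = √(L² − 2D/σ²) and G = √(L² − 2(C+D)/σ²), assuming L² − 2(C+D)/σ² > 0. For i = 1,2 let dᵢ = (−1)ⁱG + L, aᵢ = (−1)^{i+1}(M−G), bᵢ = (−1)ⁱ(M+G), cᵢ = 1 + 2(−1)ⁱG. Then for i = 1,2 the function h(s) = s^{dᵢ}·₂F₁(aᵢ; bᵢ; cᵢ; −s) satisfies (σ²s²/2)h''(s) + μ s h'(s) + (C/(s+1) + D)h(s) = 0 on (0,∞) whenever cᵢ is not a nonpositive integer. -/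
open Set

/-- With ω(s) = −C/(s+1) − D, the functions h(s) = s^{dᵢ}·₂F₁(aᵢ;bᵢ;cᵢ;−s)
solve (σ²s²/2)h'' + μsh' + (C/(s+1)+D)h = 0 on (0,∞). Here ₂F₁ is
represented by any solution F of the Gauss hypergeometric ODE
z(1−z)F'' + (c − (a+b+1)z)F' − abF = 0 on (−∞,0); the sign e ∈ {1,−1}
encodes (−1)ⁱ. -/
theorem stmt10 (C D μ σ : ℝ) (hC : 0 < C) (hD : 0 < D) (hσ : 0 < σ)
    (L M G : ℝ)
    (hL : L = 1 / 2 - μ / σ ^ 2)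
    (hpos : 0 < L ^ 2 - 2 * (C + D) / σ ^ 2)
    (hM : M = Real.sqrt (L ^ 2 - 2 * D / σ ^ 2))
    (hG : G = Real.sqrt (L ^ 2 - 2 * (C + D) / σ ^ 2))
    (e : ℝ) (he : e = 1 ∨ e = -1)
    (a b c d : ℝ)
    (ha : a = -e * (M - G)) (hb : b = e * (M + G))
    (hc : c = 1 + 2 * e * G) (hd : d = e * G + L)
    (hcint : ∀ k : ℕ, c ≠ -(k : ℝ))
    (F : ℝ → ℝ)
    (hF : ContDiffOn ℝ 2 F (Iio 0))
    (hFode : ∀ z : ℝ, z < 0 →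
      z * (1 - z) * deriv (deriv F) z + (c - (a + b + 1) * z) * deriv F z
        - a * b * F z = 0) :
    ∀ s : ℝ, 0 < s →
      σ ^ 2 * s ^ 2 / 2
          * deriv (deriv (fun s' : ℝ => s' ^ (d : ℝ) * F (-s'))) s
        + μ * s * deriv (fun s' : ℝ => s' ^ (d : ℝ) * F (-s')) s
        + (C / (s + 1) + D) * (s ^ (d : ℝ) * F (-s)) = 0 := by
  have hσ2 : (0:ℝ) < σ ^ 2 := by positivity
  -- scalar identities
  have hμ : μ = (1/2 - L) * σ ^ 2 := by
    field_simp at hL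
    linarith
  have he2 : e ^ 2 = 1 := by rcases he with h | h <;> subst h <;> norm_num
  have hG2 : G ^ 2 * σ ^ 2 = L ^ 2 * σ ^ 2 - 2 * (C + D) := by
    have : G ^ 2 = L ^ 2 - 2 * (C + D) / σ ^ 2 := by
      rw [hG, Real.sq_sqrt hpos.le]
    rw [this]; field_simp
  have hM2 : M ^ 2 * σ ^ 2 = L ^ 2 * σ ^ 2 - 2 * D := by
    have hargpos : (0:ℝ) ≤ L ^ 2 - 2 * D / σ ^ 2 := by
      have h1 : 2 * D / σ ^ 2 ≤ 2 * (C + D) / σ ^ 2 := by gcongr; linarith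
      linarith
    have : M ^ 2 = L ^ 2 - 2 * D / σ ^ 2 := by
      rw [hM, Real.sq_sqrt hargpos]
    rw [this]; field_simp
  have id1 : σ ^ 2 * d * (d - 1) / 2 + μ * d + D + C = 0 := by
    subst hd
    linear_combination (e * G + L) * hμ + (σ ^ 2 * G ^ 2 / 2) * he2 + (1/2 : ℝ) * hG2
  have id2 : σ ^ 2 * (a * b) + 2 * C = 0 := by
    subst ha hb
    linear_combination (σ ^ 2 * (G ^ 2 - M ^ 2)) * he2 + hG2 - hM2
  have id3 : a + b + 1 = c := by subst ha hb hc; ring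
  have id4 : 2 * d * σ ^ 2 + 2 * μ = c * σ ^ 2 := by
    subst hd hc; linear_combination 2 * hμ
  -- differentiability facts
  have hF1 : DifferentiableOn ℝ F (Iio 0) := hF.differentiableOn (by norm_num)
  have hF' : ContDiffOn ℝ 1 (deriv F) (Iio 0) := hF.deriv_of_isOpen isOpen_Iio (by norm_num)
  have hF'1 : DifferentiableOn ℝ (deriv F) (Iio 0) := hF'.differentiableOn (by norm_num)
  have hmem : ∀ t : ℝ, 0 < t → Iio (0:ℝ) ∈ nhds (-t) := by
    intro t ht; exact isOpen_Iio.mem_nhds (by simpa using ht)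
  have hFc : ∀ t : ℝ, 0 < t → HasDerivAt (fun s' : ℝ => F (-s')) (-deriv F (-t)) t := by
    intro t ht
    have h1 : DifferentiableAt ℝ F (-t) := hF1.differentiableAt (hmem t ht)
    have := h1.hasDerivAt.comp t (hasDerivAt_neg t)
    exact this.congr_deriv (by ring)
  have hF'c : ∀ t : ℝ, 0 < t → HasDerivAt (fun s' : ℝ => deriv F (-s')) (-deriv (deriv F) (-t)) t := by
    intro t ht
    have h1 : DifferentiableAt ℝ (deriv F) (-t) := hF'1.differentiableAt (hmem t ht)
    have := h1.hasDerivAt.comp t (hasDerivAt_neg t)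
    exact this.congr_deriv (by ring)
  -- first derivative of h
  have hder1 : ∀ t : ℝ, 0 < t →
      HasDerivAt (fun s' : ℝ => s' ^ (d : ℝ) * F (-s'))
        (d * t ^ (d - 1) * F (-t) - t ^ (d:ℝ) * deriv F (-t)) t := by
    intro t ht
    have h1 : HasDerivAt (fun s' : ℝ => s' ^ (d:ℝ)) (d * t ^ (d-1)) t :=
      Real.hasDerivAt_rpow_const (Or.inl ht.ne')
    have := h1.mul (hFc t ht)
    refine this.congr_deriv ?_
    ring
  have hderiv1 : ∀ t : ℝ, 0 < t →
      deriv (fun s' : ℝ => s' ^ (d : ℝ) * F (-s')) t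
        = d * t ^ (d - 1) * F (-t) - t ^ (d:ℝ) * deriv F (-t) := by
    intro t ht; exact (hder1 t ht).deriv
  -- second derivative
  intro s hs
  have hg : HasDerivAt (fun t : ℝ => d * t ^ (d - 1) * F (-t) - t ^ (d:ℝ) * deriv F (-t))
      (d * ((d-1) * s ^ (d-2) * F (-s) - s ^ (d-1) * deriv F (-s))
        - (d * s ^ (d-1) * deriv F (-s) - s ^ (d:ℝ) * deriv (deriv F) (-s))) s := by
    have h1 : HasDerivAt (fun t : ℝ => t ^ (d-1:ℝ)) ((d-1) * s ^ (d-1-1)) s :=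
      Real.hasDerivAt_rpow_const (Or.inl hs.ne')
    have h2 : HasDerivAt (fun t : ℝ => t ^ (d:ℝ)) (d * s ^ (d-1)) s :=
      Real.hasDerivAt_rpow_const (Or.inl hs.ne')
    have hA := ((h1.mul (hFc s hs)).const_mul d).sub (h2.mul (hF'c s hs))
    have heqf : (fun t : ℝ => d * t ^ (d - 1) * F (-t) - t ^ (d:ℝ) * deriv F (-t))
        = fun x : ℝ => d * (x ^ (d-1:ℝ) * F (-x)) - x ^ (d:ℝ) * deriv F (-x) := by
      funext x; ring
    rw [heqf]
    refine hA.congr_deriv ?_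
    have h21 : d - 1 - 1 = d - 2 := by ring
    rw [h21]; ring
  have hEq : deriv (deriv (fun s' : ℝ => s' ^ (d : ℝ) * F (-s'))) s
      = d * ((d-1) * s ^ (d-2) * F (-s) - s ^ (d-1) * deriv F (-s))
        - (d * s ^ (d-1) * deriv F (-s) - s ^ (d:ℝ) * deriv (deriv F) (-s)) := by
    have hev : deriv (fun s' : ℝ => s' ^ (d : ℝ) * F (-s'))
        =ᶠ[nhds s] fun t => d * t ^ (d - 1) * F (-t) - t ^ (d:ℝ) * deriv F (-t) := by
      filter_upwards [isOpen_Ioi.mem_nhds hs] with t ht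
      exact hderiv1 t ht
    rw [hev.deriv_eq]
    exact hg.deriv
  rw [hEq, hderiv1 s hs]
  -- rpow relations
  have hp1 : s ^ (d-1:ℝ) = s ^ (d-2:ℝ) * s := by
    rw [show (d-1:ℝ) = (d-2) + 1 by ring, Real.rpow_add hs, Real.rpow_one]
  have hp2 : s ^ (d:ℝ) = s ^ (d-2:ℝ) * s ^ 2 := by
    have h := Real.rpow_add hs (d-2) 2
    rw [show d - 2 + 2 = d by ring] at h
    rw [h]
    congr 1
    rw [← Real.rpow_natCast s 2]; norm_num
  set P := s ^ (d-2:ℝ) with hP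
  set F₀ := F (-s)
  set F₁ := deriv F (-s)
  set F₂ := deriv (deriv F) (-s)
  have E := hFode (-s) (by linarith)
  have hs1 : s + 1 ≠ 0 := by positivity
  have hu : (s + 1) * (s + 1)⁻¹ = 1 := mul_inv_cancel₀ hs1
  rw [hp1, hp2]
  have key : (s + 1) *
      (σ ^ 2 * s ^ 2 / 2
          * (d * ((d-1) * P * F₀ - P * s * F₁) - (d * (P * s) * F₁ - P * s ^ 2 * F₂))
        + μ * s * (d * (P * s) * F₀ - P * s ^ 2 * F₁)
        + (C / (s + 1) + D) * (P * s ^ 2 * F₀)) = 0 := by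
    linear_combination (-(σ ^ 2) / 2 * P * s ^ 3) * E
      + (P * s ^ 2 * (s + 1) * F₀) * id1
      + (-P * s ^ 3 / 2 * F₀) * id2
      + (σ ^ 2 * s ^ 4 / 2 * P * F₁) * id3
      + (-(s + 1) / 2 * P * s ^ 3 * F₁) * id4
      + (C * P * s ^ 2 * F₀) * hu
  have := (mul_eq_zero.mp key).resolve_left hs1
  linarith [this]
end
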